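/- Let K be a field, let ι be an index type, let (A_i)_{i∈ι} be a family of K-vector spaces and let B be a K-vector space. The canonical K-linear map (∏_{i∈ι} A_i) ⊗_K B → ∏_{i∈ι} (A_i ⊗_K B), sending (a_i)_i ⊗ b to (a_i ⊗ b)_i, is injective. -/

import Mathlib

open TensorProduct

/-- Auxiliary: the composite `M ⊗ B → M ⊗ (J →₀ K) → (J →₀ M)` coming from a basis. -/
noncomputable def tensorBasisEquiv (K : Type*) [Field K] {J : Type*} [DecidableEq J]
    (M : Type*) [AddCommGroup M] [Module K M]
    {B : Type*} [AddCommGroup B] [Module K B] (b : Module.Basis J K B) :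
    M ⊗[K] B ≃ₗ[K] (J →₀ M) :=
  (TensorProduct.congr (LinearEquiv.refl K M) b.repr).trans
    (TensorProduct.finsuppScalarRight K K M J)

lemma tensorBasisEquiv_tmul (K : Type*) [Field K] {J : Type*} [DecidableEq J]
    (M : Type*) [AddCommGroup M] [Module K M]
    {B : Type*} [AddCommGroup B] [Module K B] (b : Module.Basis J K B)
    (m : M) (x : B) (j : J) :
    tensorBasisEquiv K M b (m ⊗ₜ[K] x) j = b.repr x j • m := by
  simp [tensorBasisEquiv, TensorProduct.finsuppScalarRight_apply_tmul_apply]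

/-- over a field `K`, the canonical map
`(∏ᵢ Aᵢ) ⊗ B → ∏ᵢ (Aᵢ ⊗ B)`, sending `(aᵢ)ᵢ ⊗ b` to `(aᵢ ⊗ b)ᵢ`,
is injective. -/
theorem pi_tensor_to_tensor_pi_injective_of_field
    (K : Type*) [Field K]
    (ι : Type*) (A : ι → Type*)
    [∀ i, AddCommGroup (A i)] [∀ i, Module K (A i)]
    (B : Type*) [AddCommGroup B] [Module K B] :
    Function.Injective
      ((LinearMap.pi fun i =>
          TensorProduct.map (LinearMap.proj i) LinearMap.id) :
        ((∀ i, A i) ⊗[K] B) →ₗ[K] ∀ i, A i ⊗[K] B) := by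
  classical
  obtain ⟨J, b⟩ := Module.Free.exists_basis (R := K) (M := B)
  have : DecidableEq J := Classical.decEq J
  rw [injective_iff_map_eq_zero]
  intro x hx
  -- compatibility of the equivalences with the map
  have key : ∀ (y : (∀ i, A i) ⊗[K] B) (i : ι) (j : J),
      tensorBasisEquiv K (A i) b
        (TensorProduct.map (LinearMap.proj i) LinearMap.id y) j
      = tensorBasisEquiv K (∀ i, A i) b y j i := by
    intro y
    induction y using TensorProduct.induction_on with
    | zero => simp
    | tmul m x => intro i j; simp [tensorBasisEquiv_tmul]
    | add u v hu hv => intro i j; simp [hu, hv]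
  have h0 : tensorBasisEquiv K (∀ i, A i) b x = 0 := by
    ext j i
    have := key x i j
    rw [← this]
    have : TensorProduct.map (LinearMap.proj (R := K) (φ := A) i)
        LinearMap.id x = 0 := congrFun hx i
    simp [this]
  simpa using congrArg (tensorBasisEquiv K (∀ i, A i) b).symm h0
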